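/- Fix κ ∈ (0,1) and t > 0. The equation e^{√a t}·(|κ| + √a) = ((√a + 1)/(√a − 1))·(√a − |κ|) has a unique solution a > 1. -/

import Mathlib

open Real

private lemma key17 (κ t x y : ℝ) (hκ0 : 0 < κ) (hκ1 : κ < 1) (ht : 0 < t)
    (hx : 1 < x) (hy : 1 < y) (hxy : x < y)
    (hEx : Real.exp (x*t) * (κ + x) = ((x+1)/(x-1)) * (x - κ))
    (hEy : Real.exp (y*t) * (κ + y) = ((y+1)/(y-1)) * (y - κ)) : False := by
  have hx1 : (0:ℝ) < x - 1 := by linarith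
  have hy1 : (0:ℝ) < y - 1 := by linarith
  have hpx : 0 < (x-1)*(x+κ) := mul_pos hx1 (by linarith)
  have hpy : 0 < (y-1)*(y+κ) := mul_pos hy1 (by linarith)
  have hEx' : Real.exp (x*t) * ((x-1)*(x+κ)) = (x+1)*(x-κ) := by
    field_simp at hEx
    linear_combination hEx
  have hEy' : Real.exp (y*t) * ((y-1)*(y+κ)) = (y+1)*(y-κ) := by
    field_simp at hEy
    linear_combination hEy
  have hE : Real.exp (x*t) < Real.exp (y*t) :=
    Real.exp_lt_exp.2 (by nlinarith)
  have h3 : (x+1)*(x-κ) * ((y-1)*(y+κ)) < (y+1)*(y-κ) * ((x-1)*(x+κ)) := by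
    have h := mul_lt_mul_of_pos_right (mul_lt_mul_of_pos_right hE hpx) hpy
    rw [hEx'] at h
    calc (x+1)*(x-κ)*((y-1)*(y+κ)) < Real.exp (y*t)*((x-1)*(x+κ))*((y-1)*(y+κ)) := h
      _ = Real.exp (y*t)*((y-1)*(y+κ)) * ((x-1)*(x+κ)) := by ring
      _ = (y+1)*(y-κ)*((x-1)*(x+κ)) := by rw [hEy']
  nlinarith [mul_pos (mul_pos (sub_pos.2 hκ1) (sub_pos.2 hxy))
    (show 0 < x*y+κ by nlinarith), h3]

set_option maxHeartbeats 1000000 in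
theorem stmt17 (κ t : ℝ) (hκ : κ ∈ Set.Ioo (0 : ℝ) 1) (ht : 0 < t) :
    ∃! a : ℝ, 1 < a ∧
      Real.exp (Real.sqrt a * t) * (|κ| + Real.sqrt a) =
        ((Real.sqrt a + 1) / (Real.sqrt a - 1)) * (Real.sqrt a - |κ|) := by
  obtain ⟨hκ0, hκ1⟩ := hκ
  have habs : |κ| = κ := abs_of_pos hκ0
  -- the function H
  set H : ℝ → ℝ := fun s => s*t - Real.log (((s+1)*(s-κ))/((s-1)*(s+κ))) with hH
  -- endpoints
  set δ : ℝ := (1-κ)/(3*Real.exp (2*t)) with hδ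
  have hEt : (1:ℝ) ≤ Real.exp (2*t) := by
    rw [show (1:ℝ) = Real.exp 0 by simp]
    exact Real.exp_le_exp.2 (by linarith)
  have hδ0 : 0 < δ := by
    apply div_pos (by linarith)
    positivity
  have hδ3 : δ ≤ 1/3 := by
    rw [hδ, div_le_div_iff₀ (by positivity) (by norm_num)]
    nlinarith
  set s₁ : ℝ := 1 + δ with hs₁
  set s₂ : ℝ := 3 + 2/t with hs₂
  have hs₁1 : 1 < s₁ := by simp [hs₁]; linarith
  have hs₁2 : s₁ ≤ 2 := by simp [hs₁]; linarith
  have hs₂3 : 3 < s₂ := by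
    have : 0 < 2/t := by positivity
    simp [hs₂]; linarith
  have hs₁s₂ : s₁ ≤ s₂ := by linarith
  -- positivity of ratio on (1, ∞)
  have hRpos : ∀ s : ℝ, 1 < s → 0 < ((s+1)*(s-κ))/((s-1)*(s+κ)) := by
    intro s hs
    apply div_pos (mul_pos (by linarith) (by linarith)) (mul_pos (by linarith) (by linarith))
  -- continuity
  have hcont : ContinuousOn H (Set.Icc s₁ s₂) := by
    apply ContinuousOn.sub (Continuous.continuousOn (by continuity))
    apply ContinuousOn.log
    · apply ContinuousOn.div
      · exact Continuous.continuousOn (by continuity)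
      · exact Continuous.continuousOn (by continuity)
      · intro s hs
        have h1 : 1 < s := lt_of_lt_of_le hs₁1 hs.1
        exact ne_of_gt (mul_pos (by linarith) (by linarith))
    · intro s hs
      have h1 : 1 < s := lt_of_lt_of_le hs₁1 hs.1
      exact ne_of_gt (hRpos s h1)
  -- H s₁ < 0
  have hH1 : H s₁ < 0 := by
    have hR : Real.exp (s₁*t) < ((s₁+1)*(s₁-κ))/((s₁-1)*(s₁+κ)) := by
      have hlt : Real.exp (s₁*t) ≤ Real.exp (2*t) :=
        Real.exp_le_exp.2 (by nlinarith)
      have hd : (0:ℝ) < (s₁-1)*(s₁+κ) := mul_pos (by linarith) (by linarith)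
      rw [lt_div_iff₀ hd]
      have hEδ : Real.exp (2*t) * δ = (1-κ)/3 := by
        rw [hδ]; field_simp
      have key : Real.exp (2*t) * ((s₁-1)*(s₁+κ)) < (s₁+1)*(s₁-κ) := by
        have hs1m : s₁ - 1 = δ := by simp [hs₁]
        rw [hs1m, show Real.exp (2*t) * (δ*(s₁+κ)) = (Real.exp (2*t)*δ)*(s₁+κ) by ring, hEδ]
        nlinarith
      calc Real.exp (s₁*t) * ((s₁-1)*(s₁+κ)) ≤ Real.exp (2*t) * ((s₁-1)*(s₁+κ)) := by
            apply mul_le_mul_of_nonneg_right hlt (le_of_lt hd)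
        _ < (s₁+1)*(s₁-κ) := key
    have : s₁ * t < Real.log (((s₁+1)*(s₁-κ))/((s₁-1)*(s₁+κ))) := by
      have := Real.log_lt_log (Real.exp_pos _) hR
      rwa [Real.log_exp] at this
    simp only [hH]; linarith
  -- H s₂ > 0
  have hH2 : 0 < H s₂ := by
    have hd : (0:ℝ) < (s₂-1)*(s₂+κ) := mul_pos (by linarith) (by linarith)
    have hR : ((s₂+1)*(s₂-κ))/((s₂-1)*(s₂+κ)) < Real.exp (s₂*t) := by
      have h2 : ((s₂+1)*(s₂-κ))/((s₂-1)*(s₂+κ)) ≤ 2 := by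
        rw [div_le_iff₀ hd]; nlinarith
      have h3 : (3:ℝ) ≤ Real.exp (s₂*t) := by
        have := Real.add_one_le_exp (s₂*t)
        have hst : s₂ * t = 3*t + 2 := by
          rw [hs₂]; field_simp
        linarith
      linarith
    have : Real.log (((s₂+1)*(s₂-κ))/((s₂-1)*(s₂+κ))) < s₂ * t := by
      have := Real.log_lt_log (hRpos s₂ (by linarith)) hR
      rwa [Real.log_exp] at this
    simp only [hH]; linarith
  -- IVT
  have hmem : (0:ℝ) ∈ Set.Icc (H s₁) (H s₂) := ⟨le_of_lt hH1, le_of_lt hH2⟩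
  obtain ⟨s, hsmem, hs0⟩ := intermediate_value_Icc hs₁s₂ hcont hmem
  have hs1 : 1 < s := lt_of_lt_of_le hs₁1 hsmem.1
  have hs0' : Real.exp (s*t) = ((s+1)*(s-κ))/((s-1)*(s+κ)) := by
    have : s*t = Real.log (((s+1)*(s-κ))/((s-1)*(s+κ))) := by
      simp only [hH] at hs0; linarith
    rw [this, Real.exp_log (hRpos s hs1)]
  -- the solution
  refine ⟨s^2, ⟨by nlinarith, ?_⟩, ?_⟩
  · have hss : Real.sqrt (s^2) = s := Real.sqrt_sq (by linarith)
    rw [hss, habs]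
    rw [hs0']
    have h1 : s - 1 ≠ 0 := by intro h; nlinarith [hs1]
    have h2 : s + κ ≠ 0 := by intro h; nlinarith [hs1, hκ0]
    field_simp
    ring
  · rintro b ⟨hb1, hbeq⟩
    have hb0 : (0:ℝ) ≤ b := by linarith
    have hy1 : 1 < Real.sqrt b := by
      rw [show (1:ℝ) = Real.sqrt 1 by simp]
      exact Real.sqrt_lt_sqrt (by norm_num) hb1
    set y := Real.sqrt b with hy
    have hbeq' : Real.exp (y*t) * (κ + y) = ((y+1)/(y-1)) * (y - κ) := by
      rw [habs] at hbeq; exact hbeq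
    have hseq : Real.exp (s*t) * (κ + s) = ((s+1)/(s-1)) * (s - κ) := by
      rw [hs0']
      have h1 : s - 1 ≠ 0 := by intro h; nlinarith [hs1]
      have h2 : s + κ ≠ 0 := by intro h; nlinarith [hs1, hκ0]
      field_simp
      ring
    have hys : y = s := by
      rcases lt_trichotomy y s with h | h | h
      · exact absurd (key17 κ t y s hκ0 hκ1 ht hy1 hs1 h hbeq' hseq) id
      · exact h
      · exact absurd (key17 κ t s y hκ0 hκ1 ht hs1 hy1 h hseq hbeq') id
    rw [← Real.sq_sqrt hb0, ← hy, hys]
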